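/- Let μ be a probability measure on ℝⁿ. Then the chi-squared divergence of the convolution N(0,I_n) ∗ μ from N(0,I_n) satisfies χ²(N(0,I_n)∗μ ‖ N(0,I_n)) ≤ E[e^{⟨x,x'⟩}] − 1, where x, x' are independent samples from μ. -/

import Mathlib

open MeasureTheory ProbabilityTheory Real
open scoped ENNReal

/-- The standard Gaussian measure `N(0, I_n)` on `Fin n → ℝ`. -/
noncomputable def stdGaussian (n : ℕ) : Measure (Fin n → ℝ) :=
  Measure.pi fun _ => gaussianReal 0 1

/-- The convolution of two measures on `Fin n → ℝ`. -/
noncomputable def conv {n : ℕ} (μ ν : Measure (Fin n → ℝ)) : Measure (Fin n → ℝ) :=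
  Measure.map (fun p => p.1 + p.2) (μ.prod ν)


lemma gaussianPDFReal_shift (y t : ℝ) :
    gaussianPDFReal y 1 t = gaussianPDFReal 0 1 t * Real.exp (t * y - y ^ 2 / 2) := by
  simp only [gaussianPDFReal, NNReal.coe_one, mul_one, sub_zero]
  rw [mul_assoc, ← Real.exp_add]
  ring_nf

lemma gaussianReal_shift (y : ℝ) :
    gaussianReal y 1 = (gaussianReal 0 1).withDensity
      (fun t => ENNReal.ofReal (Real.exp (t * y - y ^ 2 / 2))) := by
  rw [gaussianReal_of_var_ne_zero _ one_ne_zero, gaussianReal_of_var_ne_zero _ one_ne_zero,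
    ← withDensity_mul _ (measurable_gaussianPDF 0 1)
      (by fun_prop)]
  congr 1
  ext t
  simp only [Pi.mul_apply, gaussianPDF]
  rw [← ENNReal.ofReal_mul (gaussianPDFReal_nonneg 0 1 t),
    ← gaussianPDFReal_shift]

lemma lintegral_exp_mul_gaussian (z : ℝ) :
    ∫⁻ t, ENNReal.ofReal (Real.exp (t * z)) ∂(gaussianReal 0 1)
      = ENNReal.ofReal (Real.exp (z ^ 2 / 2)) := by
  have h1 : (gaussianReal z 1) Set.univ = 1 := measure_univ
  rw [gaussianReal_shift z, withDensity_apply _ MeasurableSet.univ,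
    Measure.restrict_univ] at h1
  have : ∀ t : ℝ, ENNReal.ofReal (Real.exp (t * z))
      = ENNReal.ofReal (Real.exp (z ^ 2 / 2)) * ENNReal.ofReal (Real.exp (t * z - z ^ 2 / 2)) := by
    intro t
    rw [← ENNReal.ofReal_mul (Real.exp_nonneg _), ← Real.exp_add]
    ring_nf
  simp_rw [this]
  rw [lintegral_const_mul _ (by fun_prop), h1, mul_one]


lemma lintegral_pi_prod : ∀ {n : ℕ} (μ : Fin n → Measure ℝ), (∀ i, SigmaFinite (μ i)) →
    ∀ (g : Fin n → ℝ → ℝ≥0∞), (∀ i, Measurable (g i)) →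
    ∫⁻ x, ∏ i, g i (x i) ∂(Measure.pi μ) = ∏ i, ∫⁻ t, g i t ∂(μ i) := by
  intro n
  induction n with
  | zero =>
    intro μ _ g _
    simp [lintegral_const, Measure.pi_univ]
  | succ n ih =>
    intro μ hμ g hg
    have := hμ
    have h := (measurePreserving_piFinSuccAbove (fun i : Fin (n + 1) => μ i) 0).symm
    have hm : Measurable fun x : Fin (n + 1) → ℝ => ∏ i, g i (x i) := by
      fun_prop
    rw [← h.lintegral_comp hm]
    simp_rw [MeasurableEquiv.piFinSuccAbove_symm_apply, Fin.insertNthEquiv,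
      Fin.prod_univ_succ, Fin.insertNth_zero, Equiv.coe_fn_mk, Fin.zero_succAbove,
      Fin.cons_zero, Fin.cons_succ, cast_eq]
    have := fun i : Fin n => hμ i.succ
    rw [lintegral_prod_mul (f := g 0) (g := fun b : Fin n → ℝ => ∏ j : Fin n, g j.succ (b j)) (hg 0).aemeasurable (Finset.aemeasurable_fun_prod _ (fun (j : Fin n) _ => ((hg j.succ).comp (measurable_pi_apply j)).aemeasurable)),
      ih (fun i => μ i.succ) (fun i => hμ i.succ) (fun i => g i.succ) (fun i => hg i.succ)]


noncomputable def fy {n : ℕ} (y : Fin n → ℝ) (x : Fin n → ℝ) : ℝ≥0∞ :=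
  ENNReal.ofReal (Real.exp (∑ i, (x i * y i - y i ^ 2 / 2)))

lemma fy_eq_prod {n : ℕ} (y x : Fin n → ℝ) :
    fy y x = ∏ i, ENNReal.ofReal (Real.exp (x i * y i - y i ^ 2 / 2)) := by
  rw [fy, Real.exp_sum, ENNReal.ofReal_prod_of_nonneg (fun i _ => (Real.exp_nonneg _))]

lemma measurable_fy {n : ℕ} (y : Fin n → ℝ) : Measurable (fy y) := by
  unfold fy; fun_prop

lemma map_add_stdGaussian {n : ℕ} (y : Fin n → ℝ) :
    Measure.map (· + y) (stdGaussian n) = (stdGaussian n).withDensity (fy y) := by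
  have hmeas : Measurable fun x : Fin n → ℝ => x + y :=
    (continuous_id.add continuous_const).measurable
  have step1 : Measure.map (· + y) (stdGaussian n)
      = Measure.pi (fun i => gaussianReal (y i) 1) := by
    refine (Measure.pi_eq (μ := fun i => gaussianReal (y i) 1) fun s hs => ?_).symm
    rw [Measure.map_apply hmeas (MeasurableSet.univ_pi hs)]
    have hpre : (· + y) ⁻¹' (Set.univ.pi s) = Set.univ.pi (fun i => (· + y i) ⁻¹' s i) := by
      ext x
      simp [Set.mem_pi]
    rw [hpre, _root_.stdGaussian, Measure.pi_pi]
    refine Finset.prod_congr rfl fun i _ => ?_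
    rw [← Measure.map_apply (measurable_add_const (y i)) (hs i), gaussianReal_map_add_const,
      zero_add]
  have step2 : Measure.pi (fun i => gaussianReal (y i) 1)
      = (stdGaussian n).withDensity (fy y) := by
    refine Measure.pi_eq (μ := fun i => gaussianReal (y i) 1) fun s hs => ?_
    rw [withDensity_apply _ (MeasurableSet.univ_pi hs), ← lintegral_indicator (MeasurableSet.univ_pi hs) (fy y)]
    have hind : ∀ x, (Set.univ.pi s).indicator (fy y) x
        = ∏ i, (s i).indicator
            (fun t => ENNReal.ofReal (Real.exp (t * y i - y i ^ 2 / 2))) (x i) := by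
      intro x
      by_cases hx : x ∈ Set.univ.pi s
      · rw [Set.indicator_of_mem hx, fy_eq_prod]
        refine Finset.prod_congr rfl fun i _ => ?_
        rw [Set.indicator_of_mem (hx i (Set.mem_univ i))]
      · rw [Set.indicator_of_notMem hx]
        rw [Set.mem_univ_pi] at hx
        push_neg at hx
        obtain ⟨i, hi⟩ := hx
        exact (Finset.prod_eq_zero (Finset.mem_univ i) (by
          rw [Set.indicator_of_notMem hi])).symm
    simp_rw [hind]
    rw [_root_.stdGaussian, lintegral_pi_prod _ (fun i => inferInstance) _
      (fun i => Measurable.indicator (by fun_prop) (hs i))]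
    refine Finset.prod_congr rfl fun i _ => ?_
    rw [lintegral_indicator (hs i) _, gaussianReal_shift (y i),
      withDensity_apply _ (hs i)]
  rw [step1, step2]

lemma lintegral_exp_inner_stdGaussian {n : ℕ} (z : Fin n → ℝ) :
    ∫⁻ x, ENNReal.ofReal (Real.exp (∑ i, x i * z i)) ∂(stdGaussian n)
      = ENNReal.ofReal (Real.exp (∑ i, z i ^ 2 / 2)) := by
  have : ∀ x : Fin n → ℝ, ENNReal.ofReal (Real.exp (∑ i, x i * z i))
      = ∏ i, ENNReal.ofReal (Real.exp (x i * z i)) := by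
    intro x
    rw [Real.exp_sum, ENNReal.ofReal_prod_of_nonneg (fun i _ => Real.exp_nonneg _)]
  simp_rw [this]
  rw [_root_.stdGaussian, lintegral_pi_prod _ (fun i => inferInstance)
    (fun i t => ENNReal.ofReal (Real.exp (t * z i))) (fun i => by fun_prop)]
  simp_rw [lintegral_exp_mul_gaussian]
  rw [← ENNReal.ofReal_prod_of_nonneg (fun i _ => Real.exp_nonneg _), ← Real.exp_sum]


instance stdGaussian_prob {n : ℕ} : IsProbabilityMeasure (stdGaussian n) := by
  unfold _root_.stdGaussian; infer_instance

lemma measurable_fy' {n : ℕ} : Measurable (fun p : (Fin n → ℝ) × (Fin n → ℝ) => fy p.1 p.2) := by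
  unfold fy; fun_prop

lemma measurable_fy_swap {n : ℕ} (x : Fin n → ℝ) : Measurable (fun y => fy y x) := by
  unfold fy; fun_prop

noncomputable def Fdens {n : ℕ} (μ : Measure (Fin n → ℝ)) (x : Fin n → ℝ) : ℝ≥0∞ :=
  ∫⁻ y, fy y x ∂μ

lemma measurable_Fdens {n : ℕ} (μ : Measure (Fin n → ℝ)) [SFinite μ] :
    Measurable (Fdens μ) := by
  have h : Fdens μ = fun x => ∫⁻ y, fy y x ∂μ := rfl
  rw [h]
  exact Measurable.lintegral_prod_right (f := fun x y => fy y x) (by unfold fy; fun_prop)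

lemma conv_eq_withDensity {n : ℕ} (μ : Measure (Fin n → ℝ)) [IsProbabilityMeasure μ] :
    conv (stdGaussian n) μ = (stdGaussian n).withDensity (Fdens μ) := by
  ext s hs
  rw [conv, Measure.map_apply (by exact measurable_fst.add measurable_snd : Measurable fun p : (Fin n → ℝ) × (Fin n → ℝ) => p.1 + p.2) hs,
    Measure.prod_apply_symm ((by exact measurable_fst.add measurable_snd : Measurable fun p : (Fin n → ℝ) × (Fin n → ℝ) => p.1 + p.2) hs)]
  have hinner : ∀ y, stdGaussian n
      ((fun x => (x, y)) ⁻¹' ((fun p : (Fin n → ℝ) × (Fin n → ℝ) => p.1 + p.2) ⁻¹' s))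
      = ∫⁻ x, s.indicator (fun _ => (1 : ℝ≥0∞)) x * fy y x ∂(stdGaussian n) := by
    intro y
    have h1 : ((fun x => (x, y)) ⁻¹'
        ((fun p : (Fin n → ℝ) × (Fin n → ℝ) => p.1 + p.2) ⁻¹' s)) = (· + y) ⁻¹' s := rfl
    have hadd : Measurable fun x : Fin n → ℝ => x + y :=
      (continuous_id.add continuous_const).measurable
    rw [h1, ← Measure.map_apply hadd hs, map_add_stdGaussian,
      withDensity_apply _ hs, ← lintegral_indicator hs (fy y)]
    refine lintegral_congr fun x => ?_
    by_cases hx : x ∈ s <;> simp [hx]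
  simp_rw [hinner]
  rw [lintegral_lintegral_swap (f := fun y x => s.indicator (fun _ => (1 : ℝ≥0∞)) x * fy y x)
    (by
      apply Measurable.aemeasurable
      exact ((measurable_const.indicator hs).comp measurable_snd).mul measurable_fy')]
  have houter : ∀ x, ∫⁻ y, s.indicator (fun _ => (1 : ℝ≥0∞)) x * fy y x ∂μ
      = s.indicator (Fdens μ) x := by
    intro x
    rw [lintegral_const_mul _ (measurable_fy_swap x)]
    by_cases hx : x ∈ s <;> simp [hx, Fdens]
  simp_rw [houter]
  rw [withDensity_apply _ hs, ← lintegral_indicator hs (Fdens μ)]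

lemma lintegral_Fdens_sq {n : ℕ} (μ : Measure (Fin n → ℝ)) [IsProbabilityMeasure μ] :
    ∫⁻ x, Fdens μ x ^ 2 ∂(stdGaussian n)
      = ∫⁻ p : (Fin n → ℝ) × (Fin n → ℝ),
          ENNReal.ofReal (Real.exp (∑ i, p.1 i * p.2 i)) ∂(μ.prod μ) := by
  have hsq : ∀ x, Fdens μ x ^ 2
      = ∫⁻ p : (Fin n → ℝ) × (Fin n → ℝ), fy p.1 x * fy p.2 x ∂(μ.prod μ) := by
    intro x
    rw [pow_two, Fdens,
      lintegral_prod_mul (f := fun y => fy y x) (g := fun y => fy y x)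
        (measurable_fy_swap x).aemeasurable (measurable_fy_swap x).aemeasurable]
  simp_rw [hsq]
  have hswap := lintegral_lintegral_swap (μ := stdGaussian n) (ν := μ.prod μ)
    (f := fun x p => fy p.1 x * fy p.2 x)
    (by
      apply Measurable.aemeasurable
      unfold fy
      fun_prop)
  rw [hswap]
  refine lintegral_congr fun p => ?_
  obtain ⟨y, y'⟩ := p
  have h1 : ∀ x, fy y x * fy y' x
      = ENNReal.ofReal (Real.exp (-(∑ i, y i ^ 2 / 2) - ∑ i, y' i ^ 2 / 2))
        * ENNReal.ofReal (Real.exp (∑ i, x i * (y i + y' i))) := by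
    intro x
    rw [fy, fy, ← ENNReal.ofReal_mul (Real.exp_nonneg _),
      ← ENNReal.ofReal_mul (Real.exp_nonneg _), ← Real.exp_add, ← Real.exp_add]
    congr 2
    simp only [Finset.sum_sub_distrib, mul_add, Finset.sum_add_distrib]
    ring
  simp_rw [h1]
  rw [lintegral_const_mul _ (by fun_prop),
    lintegral_exp_inner_stdGaussian (z := fun i => y i + y' i),
    ← ENNReal.ofReal_mul (Real.exp_nonneg _), ← Real.exp_add]
  congr 2
  have h2 : ∀ i, (y i + y' i) ^ 2 / 2 = y i ^ 2 / 2 + y' i ^ 2 / 2 + y i * y' i := by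
    intro i; ring
  simp_rw [h2, Finset.sum_add_distrib]
  ring

/-- For a probability measure `μ` on `ℝⁿ`, the chi-squared divergence of `N(0,I_n) ∗ μ`
from `N(0,I_n)`, namely `∫ (d(N∗μ)/dN)² dN − 1`, is at most `E[e^{⟨x,x'⟩}] − 1` for
independent `x, x' ~ μ`. -/
theorem chiSq_conv_gaussian_le {n : ℕ} (μ : Measure (Fin n → ℝ)) [IsProbabilityMeasure μ] :
    (∫ x, (((conv (stdGaussian n) μ).rnDeriv (stdGaussian n) x).toReal) ^ 2
        ∂(stdGaussian n)) - 1
      ≤ (∫ p : (Fin n → ℝ) × (Fin n → ℝ), Real.exp (∑ i, p.1 i * p.2 i) ∂(μ.prod μ)) - 1 := by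
  have hprob : IsProbabilityMeasure (conv (stdGaussian n) μ) := by
    rw [conv]
    exact Measure.isProbabilityMeasure_map (measurable_fst.add measurable_snd).aemeasurable
  have hrn : (conv (stdGaussian n) μ).rnDeriv (stdGaussian n) =ᵐ[stdGaussian n] Fdens μ := by
    rw [conv_eq_withDensity μ]
    exact Measure.rnDeriv_withDensity _ (measurable_Fdens μ)
  have hfin := Measure.rnDeriv_lt_top (conv (stdGaussian n) μ) (stdGaussian n)
  have hL : ∫ x, (((conv (stdGaussian n) μ).rnDeriv (stdGaussian n) x).toReal) ^ 2
      ∂(stdGaussian n)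
      = (∫⁻ p : (Fin n → ℝ) × (Fin n → ℝ),
          ENNReal.ofReal (Real.exp (∑ i, p.1 i * p.2 i)) ∂(μ.prod μ)).toReal := by
    rw [integral_eq_lintegral_of_nonneg_ae (ae_of_all _ fun x => sq_nonneg _)
      ((Measure.measurable_rnDeriv _ _).ennreal_toReal.pow_const 2).aestronglyMeasurable]
    rw [← lintegral_Fdens_sq μ]
    congr 1
    refine lintegral_congr_ae ?_
    filter_upwards [hrn, hfin] with x h1 h2
    rw [← ENNReal.toReal_pow, ENNReal.ofReal_toReal (ENNReal.pow_ne_top h2.ne), h1]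
  have hR : ∫ p : (Fin n → ℝ) × (Fin n → ℝ), Real.exp (∑ i, p.1 i * p.2 i) ∂(μ.prod μ)
      = (∫⁻ p : (Fin n → ℝ) × (Fin n → ℝ),
          ENNReal.ofReal (Real.exp (∑ i, p.1 i * p.2 i)) ∂(μ.prod μ)).toReal := by
    rw [integral_eq_lintegral_of_nonneg_ae (ae_of_all _ fun p => Real.exp_nonneg _)
      (Measurable.aestronglyMeasurable (by fun_prop))]
  rw [hL, hR]
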